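/- arXiv:1703.06183 — 3 statements merged into one kernel-verified Lean document; each statement's English description precedes it below -/
import Mathlib

section
/- Let E be a finite-dimensional normed vector space over ℝ or ℂ, let S ⊆ E be a linear subspace, and let L assign to each s ≥ 0 a linear operator L_s on E such that s ↦ ‖L_s‖ (operator norm) is integrable on [0,t] for every t ≥ 0 and L_s maps S into S for every s (invariance of S under the generator). Suppose x : [0,∞) → E is continuous and satisfies the integral equation x(t) = x(0) + ∫_0^t L_s(x(s)) ds for all t ≥ 0. If x(0) ∉ S, then x(t) ∉ S for every finite t ≥ 0; i.e., a trajectory of a time-varying linear equation starting outside an invariant subspace cannot reach it exactly in finite time. -/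
open MeasureTheory intervalIntegral

set_option maxHeartbeats 1000000 in
/-- Proposition 1, no finite-time convergence for time-local linear
dynamics: let `E` be a finite-dimensional normed space over `𝕜 = ℝ` or `ℂ`, `S ⊆ E` a
subspace invariant under the (modulus-integrable) time-dependent generator `L`, and let
`x` be a continuous solution of the integral equation `x t = x 0 + ∫₀ᵗ L s (x s) ds` on
`[0,∞)`. If `x 0 ∉ S`, then `x t ∉ S` for every finite `t ≥ 0`. -/
theorem no_finite_time_reach_of_invariant_subspace
    {𝕜 : Type*} [RCLike 𝕜] {E : Type*} [NormedAddCommGroup E] [NormedSpace 𝕜 E]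
    [NormedSpace ℝ E] [IsScalarTower ℝ 𝕜 E] [FiniteDimensional 𝕜 E]
    (S : Submodule 𝕜 E) (L : ℝ → (E →L[𝕜] E))
    (hint : ∀ t : ℝ, 0 ≤ t → IntervalIntegrable L MeasureTheory.volume 0 t)
    (hinv : ∀ s : ℝ, 0 ≤ s → ∀ v ∈ S, L s v ∈ S)
    (x : ℝ → E) (hx : ContinuousOn x (Set.Ici (0 : ℝ)))
    (heq : ∀ t : ℝ, 0 ≤ t → x t = x 0 + ∫ s in (0 : ℝ)..t, L s (x s))
    (h0 : x 0 ∉ S) :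
    ∀ t : ℝ, 0 ≤ t → x t ∉ S := by
  intro T hT hST
  haveI : CompleteSpace E := FiniteDimensional.complete 𝕜 E
  haveI hScl : IsClosed (S : Set E) := Submodule.closed_of_finiteDimensional S
  -- the quotient map as a continuous linear map
  set q : E →L[𝕜] E ⧸ S := LinearMap.toContinuousLinearMap S.mkQ with hqdef
  have hq_apply : ∀ v : E, q v = Submodule.Quotient.mk v := fun v => rfl
  set y : ℝ → E ⧸ S := fun t => q (x t) with hydef
  -- the key pointwise bound coming from invariance of `S`
  have hbound : ∀ s : ℝ, 0 ≤ s → ∀ v : E, ‖q (L s v)‖ ≤ ‖L s‖ * ‖q v‖ := by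
    intro s hs v
    refine le_of_forall_pos_le_add fun ε hε => ?_
    have hδ : 0 < ε / (‖L s‖ + 1) := by positivity
    obtain ⟨w, hw, hwn⟩ := Submodule.Quotient.norm_mk_lt (q v) hδ
    rw [hq_apply v] at hw
    have hmem : w - v ∈ S := (Submodule.Quotient.eq S).mp hw
    have hmk : q (L s w) = q (L s v) := by
      rw [hq_apply, hq_apply, Submodule.Quotient.eq]
      simpa [map_sub] using hinv s hs _ hmem
    have h1 : ‖q (L s w)‖ ≤ ‖L s w‖ := by
      rw [hq_apply]; exact Submodule.Quotient.norm_mk_le S _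
    have h2 : ‖L s w‖ ≤ ‖L s‖ * ‖w‖ := (L s).le_opNorm w
    have h3 : ‖L s‖ * ‖w‖ ≤ ‖L s‖ * (‖q v‖ + ε / (‖L s‖ + 1)) :=
      mul_le_mul_of_nonneg_left hwn.le (norm_nonneg _)
    have h4 : ‖L s‖ * (ε / (‖L s‖ + 1)) ≤ ε := by
      rw [mul_div_assoc'] -- (‖L s‖ * ε) / (‖L s‖ + 1)
      rw [div_le_iff₀ (by positivity)]
      nlinarith [norm_nonneg (L s), hε.le]
    calc ‖q (L s v)‖ = ‖q (L s w)‖ := by rw [hmk]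
      _ ≤ ‖L s‖ * (‖q v‖ + ε / (‖L s‖ + 1)) := h1.trans (h2.trans h3)
      _ = ‖L s‖ * ‖q v‖ + ‖L s‖ * (ε / (‖L s‖ + 1)) := by ring
      _ ≤ ‖L s‖ * ‖q v‖ + ε := by linarith
  -- a bound on ‖x‖ over [0, T]
  obtain ⟨C, hC⟩ := isCompact_Icc.exists_bound_of_continuousOn
    (hx.mono (Set.Icc_subset_Ici_self : Set.Icc (0:ℝ) T ⊆ _))
  -- integrability of s ↦ L s (x s) on (0, T]
  have hLint : IntegrableOn L (Set.Ioc 0 T) volume := (hint T hT).1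
  have hxmeas : AEStronglyMeasurable x (volume.restrict (Set.Ioc 0 T)) :=
    (hx.mono (Set.Ioc_subset_Icc_self.trans Set.Icc_subset_Ici_self)).aestronglyMeasurable
      measurableSet_Ioc
  have hfmeas : AEStronglyMeasurable (fun s => L s (x s)) (volume.restrict (Set.Ioc 0 T)) := by
    simpa using (ContinuousLinearMap.apply 𝕜 E).aestronglyMeasurable_comp₂ hxmeas
      hLint.aestronglyMeasurable
  have hfint : IntegrableOn (fun s => L s (x s)) (Set.Ioc 0 T) volume := by
    refine Integrable.mono' (hLint.norm.mul_const C) hfmeas ?_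
    filter_upwards [ae_restrict_mem measurableSet_Ioc] with s hs
    calc ‖L s (x s)‖ ≤ ‖L s‖ * ‖x s‖ := (L s).le_opNorm (x s)
      _ ≤ ‖L s‖ * C := mul_le_mul_of_nonneg_left (hC s ⟨hs.1.le, hs.2⟩) (norm_nonneg _)
  have hsub : ∀ a b : ℝ, 0 ≤ a → a ≤ b → b ≤ T →
      IntervalIntegrable (fun s => L s (x s)) volume a b := by
    intro a b ha hab hbT
    rw [intervalIntegrable_iff_integrableOn_Ioc_of_le hab]
    exact hfint.mono_set (Set.Ioc_subset_Ioc ha hbT)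
  have hLsub : ∀ a b : ℝ, 0 ≤ a → a ≤ b → b ≤ T →
      IntervalIntegrable (fun s => ‖L s‖) volume a b := by
    intro a b ha hab hbT
    rw [intervalIntegrable_iff_integrableOn_Ioc_of_le hab]
    exact MeasureTheory.IntegrableOn.mono_set hLint.norm (Set.Ioc_subset_Ioc ha hbT)
  -- step identity in the quotient
  have hstep : ∀ a b : ℝ, 0 ≤ a → a ≤ b → b ≤ T →
      y b = y a + ∫ s in a..b, q (L s (x s)) := by
    intro a b ha hab hbT
    have h2 := intervalIntegral.integral_interval_sub_left
      (hsub 0 b le_rfl (ha.trans hab) hbT) (hsub 0 a le_rfl ha (hab.trans hbT))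
    have h1 : x b = x a + ∫ s in a..b, L s (x s) := by
      rw [heq b (ha.trans hab), heq a ha, ← h2]; abel
    have h3 := q.intervalIntegral_comp_comm (hsub a b ha hab hbT)
    simp only [hydef, h1, map_add, h3]
  have hcont_y : ContinuousOn y (Set.Icc 0 T) :=
    q.continuous.comp_continuousOn (hx.mono Set.Icc_subset_Ici_self)
  -- local vanishing lemma
  have hloc : ∀ a b : ℝ, 0 ≤ a → a ≤ b → b ≤ T → (∫ s in a..b, ‖L s‖) ≤ 1/2 →
      y b = 0 → ∀ t ∈ Set.Icc a b, y t = 0 := by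
    intro a b ha hab hbT hhalf hyb
    have hsubIcc : Set.Icc a b ⊆ Set.Icc 0 T := Set.Icc_subset_Icc ha hbT
    obtain ⟨t₀, ht₀, hmax⟩ := isCompact_Icc.exists_isMaxOn ⟨a, le_rfl, hab⟩
      ((hcont_y.mono hsubIcc).norm)
    have hM0 : (0:ℝ) ≤ ‖y t₀‖ := norm_nonneg _
    have ht₀0 : 0 ≤ t₀ := ha.trans ht₀.1
    obtain ⟨M, hM⟩ : ∃ M : ℝ, ‖y t₀‖ = M := ⟨_, rfl⟩
    have key : M ≤ 1/2 * M := by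
      have h1 : y b = y t₀ + ∫ s in t₀..b, q (L s (x s)) := hstep t₀ b ht₀0 ht₀.2 hbT
      have hneg : y t₀ = -∫ s in t₀..b, q (L s (x s)) := by
        rw [hyb] at h1
        exact eq_neg_of_add_eq_zero_left h1.symm
      have h2 : ‖y t₀‖ ≤ |∫ s in t₀..b, ‖L s‖ * M| := by
        rw [hneg, norm_neg]
        refine intervalIntegral.norm_integral_le_abs_of_norm_le ?_
          ((hLsub t₀ b ht₀0 ht₀.2 hbT).mul_const _)
        filter_upwards [ae_restrict_mem measurableSet_uIoc] with s hs
        have hs' : s ∈ Set.Ioc t₀ b := by rwa [Set.uIoc_of_le ht₀.2] at hs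
        have hs0 : 0 ≤ s := ht₀0.trans hs'.1.le
        calc ‖q (L s (x s))‖ ≤ ‖L s‖ * ‖q (x s)‖ := hbound s hs0 (x s)
          _ ≤ ‖L s‖ * M := by
              rw [← hM]
              exact mul_le_mul_of_nonneg_left (hmax ⟨ht₀.1.trans hs'.1.le, hs'.2⟩)
                (norm_nonneg _)
      have hM0' : 0 ≤ M := hM ▸ hM0
      have h3 : |∫ s in t₀..b, ‖L s‖ * M| ≤ 1/2 * M := by
        have hnn : 0 ≤ ∫ s in t₀..b, ‖L s‖ * M :=
          intervalIntegral.integral_nonneg ht₀.2 fun s _ => mul_nonneg (norm_nonneg _) hM0'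
        rw [abs_of_nonneg hnn]
        have heqm : (∫ s in t₀..b, ‖L s‖ * M) = (∫ s in t₀..b, ‖L s‖) * M :=
          intervalIntegral.integral_mul_const _ _
        have hsplit : (∫ s in a..t₀, ‖L s‖) + (∫ s in t₀..b, ‖L s‖) = ∫ s in a..b, ‖L s‖ :=
          intervalIntegral.integral_add_adjacent_intervals
            (hLsub a t₀ ha ht₀.1 (ht₀.2.trans hbT)) (hLsub t₀ b ht₀0 ht₀.2 hbT)
        have hnn2 : 0 ≤ ∫ s in a..t₀, ‖L s‖ :=
          intervalIntegral.integral_nonneg ht₀.1 fun s _ => norm_nonneg _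
        have hle : (∫ s in t₀..b, ‖L s‖) ≤ 1/2 := by linarith
        rw [heqm]
        exact mul_le_mul_of_nonneg_right hle hM0'
      have h4 := h2.trans h3
      rwa [hM] at h4
    have hMz : ‖y t₀‖ = 0 := by rw [hM]; linarith [hM ▸ hM0]
    intro t ht
    have := (hmax ht).trans hMz.le
    exact norm_le_zero_iff.mp this
  -- set of times after which `y` vanishes
  have hyT : y T = 0 := by
    rw [hydef]
    simp only [hq_apply]
    exact (Submodule.Quotient.mk_eq_zero S).mpr hST
  set Z := {t : ℝ | t ∈ Set.Icc 0 T ∧ ∀ u ∈ Set.Icc t T, y u = 0} with hZdef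
  have hTZ : T ∈ Z := ⟨⟨hT, le_rfl⟩, fun u hu => by rw [le_antisymm hu.2 hu.1]; exact hyT⟩
  have hZne : Z.Nonempty := ⟨T, hTZ⟩
  have hbdd : BddBelow Z := ⟨0, fun t ht => ht.1.1⟩
  set c := sInf Z with hcdef
  have hc0 : 0 ≤ c := le_csInf hZne fun t ht => ht.1.1
  have hcT : c ≤ T := csInf_le hbdd hTZ
  have hIoc : ∀ u ∈ Set.Ioc c T, y u = 0 := by
    intro u hu
    obtain ⟨t, htZ, htu⟩ := (csInf_lt_iff hbdd hZne).mp hu.1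
    exact htZ.2 u ⟨htu.le, hu.2⟩
  have hyc : y c = 0 := by
    rcases eq_or_lt_of_le hcT with hceq | hcT'
    · rw [hceq]; exact hyT
    · have hne : (nhdsWithin c (Set.Ioc c T)).NeBot := by
        rw [← mem_closure_iff_nhdsWithin_neBot, closure_Ioc hcT'.ne]
        exact ⟨le_rfl, hcT'.le⟩
      have h1 : Filter.Tendsto y (nhdsWithin c (Set.Ioc c T)) (nhds (y c)) :=
        (hcont_y c ⟨hc0, hcT⟩).mono fun u hu => ⟨hc0.trans hu.1.le, hu.2⟩
      have h2 : Filter.Tendsto y (nhdsWithin c (Set.Ioc c T)) (nhds 0) := by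
        refine Filter.Tendsto.congr' ?_ tendsto_const_nhds
        filter_upwards [self_mem_nhdsWithin] with u hu
        exact (hIoc u hu).symm
      exact tendsto_nhds_unique h1 h2
  have hcZ : ∀ u ∈ Set.Icc c T, y u = 0 := fun u hu =>
    hu.1.eq_or_lt.elim (fun h => h ▸ hyc) fun h => hIoc u ⟨h, hu.2⟩
  -- the infimum must be 0
  have hc_eq : c = 0 := by
    by_contra hne
    have hcpos : 0 < c := lt_of_le_of_ne hc0 (Ne.symm hne)
    have hLIcc : IntegrableOn (fun s => ‖L s‖) (Set.Icc 0 T) volume := by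
      rw [integrableOn_Icc_iff_integrableOn_Ioc]
      exact hLint.norm
    have hG : ContinuousOn (fun t => ∫ s in Set.Ioc 0 t, ‖L s‖) (Set.Icc 0 T) :=
      intervalIntegral.continuousOn_primitive hLIcc
    have hGc := hG c ⟨hc0, hcT⟩
    rw [Metric.continuousWithinAt_iff] at hGc
    obtain ⟨δ, hδ, hδ'⟩ := hGc (1/2) (by norm_num)
    set a := max 0 (c - δ/2) with hadef
    have ha0 : 0 ≤ a := le_max_left _ _
    have hac : a < c := max_lt hcpos (by linarith)
    have haT : a ≤ T := hac.le.trans hcT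
    have hdist : dist a c < δ := by
      rw [Real.dist_eq, abs_sub_lt_iff]
      constructor
      · linarith [hac]
      · have : c - δ/2 ≤ a := le_max_right _ _
        linarith
    have h1 := hδ' ⟨ha0, haT⟩ hdist
    rw [Real.dist_eq] at h1
    have h2 : (∫ s in a..c, ‖L s‖) =
        (∫ s in Set.Ioc 0 c, ‖L s‖) - (∫ s in Set.Ioc 0 a, ‖L s‖) := by
      have h3 := intervalIntegral.integral_interval_sub_left
        (hLsub 0 c le_rfl hc0 hcT) (hLsub 0 a le_rfl ha0 haT)
      rw [← h3, intervalIntegral.integral_of_le hc0, intervalIntegral.integral_of_le ha0]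
    have hint_ac : (∫ s in a..c, ‖L s‖) ≤ 1/2 := by
      rw [h2]
      rcases abs_lt.mp h1 with ⟨h4, _⟩
      linarith
    have haZ : a ∈ Z := by
      refine ⟨⟨ha0, haT⟩, fun u hu => ?_⟩
      rcases le_total u c with h | h
      · exact hloc a c ha0 hac.le hcT hint_ac hyc u ⟨hu.1, h⟩
      · exact hcZ u ⟨h, hu.2⟩
    exact absurd (csInf_le hbdd haZ) (not_le.mpr hac)
  have hy0 : y 0 = 0 := hcZ 0 ⟨hc_eq.le, hT⟩
  apply h0
  rw [hydef] at hy0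
  simp only [hq_apply] at hy0
  exact (Submodule.Quotient.mk_eq_zero S).mp hy0
end

section
/- Let ψ ∈ H be a unit vector with dim H ≥ 2 and let 𝒩 = {𝒩_1,…,𝒩_K} be a neighborhood structure. If ψ is FTS with respect to 𝒩, then: (i) span(ψ) = ⋂_{k=1}^K Σ̄_{𝒩_k}(ψ); and (ii) there exists at least one neighborhood 𝒩_k ∈ 𝒩 for which 2·dim Σ_{𝒩_k}(ψ) ≤ dim H_{𝒩_k} (the small Schmidt span condition). -/
open scoped BigOperators Matrix ComplexOrder

namespace QLS

variable {N : ℕ}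

/-- Index type of the full multipartite Hilbert space `⊗ᵢ ℂ^{d i}`. -/
abbrev Idx (d : Fin N → ℕ) : Type := ∀ i, Fin (d i)

/-- Index type of the Hilbert space `⊗_{i ∈ S} ℂ^{d i}` of a subset `S` of subsystems. -/
abbrev SIdx (d : Fin N → ℕ) (S : Finset (Fin N)) : Type := ∀ i : S, Fin (d i)

/-- Merge an index on `S` and an index on `Sᶜ` into a global index. -/
def merge (d : Fin N → ℕ) (S : Finset (Fin N)) (u : SIdx d S) (w : SIdx d Sᶜ) : Idx d :=
  fun i => if h : i ∈ S then u ⟨i, h⟩ else w ⟨i, Finset.mem_compl.mpr h⟩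

/-- Partial trace over the complement of `S`: `Tr_{Sᶜ}`. -/
noncomputable def ptrace (d : Fin N → ℕ) (S : Finset (Fin N))
    (M : Matrix (Idx d) (Idx d) ℂ) : Matrix (SIdx d S) (SIdx d S) ℂ :=
  fun u v => ∑ w : SIdx d Sᶜ, M (merge d S u w) (merge d S v w)

/-- `X` acts only on the subsystems in `S`, i.e. `X = Y ⊗ I_{Sᶜ}`. -/
def ActsOn (d : Fin N → ℕ) (S : Finset (Fin N)) (X : Matrix (Idx d) (Idx d) ℂ) : Prop :=
  ∃ Y : Matrix (SIdx d S) (SIdx d S) ℂ, ∀ (u u' : SIdx d S) (w w' : SIdx d Sᶜ),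
    X (merge d S u w) (merge d S u' w') = if w = w' then Y u u' else 0

/-- The rank-one projector `|ψ⟩⟨ψ|`. -/
noncomputable def proj (d : Fin N → ℕ) (ψ : Idx d → ℂ) : Matrix (Idx d) (Idx d) ℂ :=
  fun a b => ψ a * (starRingEnd ℂ) (ψ b)

/-- `ψ` is a unit vector. -/
def IsUnitVec (d : Fin N → ℕ) (ψ : Idx d → ℂ) : Prop :=
  ∑ a, Complex.normSq (ψ a) = 1

/-- Superoperators on the multipartite space. -/
abbrev Sop (d : Fin N → ℕ) : Type :=
  Matrix (Idx d) (Idx d) ℂ →ₗ[ℂ] Matrix (Idx d) (Idx d) ℂ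

/-- `E` is completely positive and trace preserving (Kraus form). -/
def IsCPTP (d : Fin N → ℕ) (E : Sop d) : Prop :=
  ∃ (m : ℕ) (K : Fin m → Matrix (Idx d) (Idx d) ℂ),
    (∀ ρ, E ρ = ∑ i, K i * ρ * (K i)ᴴ) ∧ (∑ i, (K i)ᴴ * K i = 1)

/-- `E` is a CPTP map whose Kraus operators all act only on `S`. -/
def IsNeighborhoodMap (d : Fin N → ℕ) (S : Finset (Fin N)) (E : Sop d) : Prop :=
  ∃ (m : ℕ) (K : Fin m → Matrix (Idx d) (Idx d) ℂ),
    (∀ i, ActsOn d S (K i)) ∧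
    (∀ ρ, E ρ = ∑ i, K i * ρ * (K i)ᴴ) ∧ (∑ i, (K i)ᴴ * K i = 1)

/-- A density matrix. -/
def IsDensity (d : Fin N → ℕ) (ρ : Matrix (Idx d) (Idx d) ℂ) : Prop :=
  ρ.PosSemidef ∧ ρ.trace = 1

/-- Sequential composition `E_{T-1} ∘ ⋯ ∘ E_1 ∘ E_0` (index `0` applied first). -/
def seqComp {V : Type*} [AddCommMonoid V] [Module ℂ V] :
    ∀ {T : ℕ}, (Fin T → (V →ₗ[ℂ] V)) → (V →ₗ[ℂ] V)
  | 0, _ => LinearMap.id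
  | T + 1, E => E (Fin.last T) ∘ₗ seqComp fun t => E t.castSucc

/-- Finite-time stabilizability of `ψ` w.r.t. the neighborhood structure `𝒩`. -/
def FTS (d : Fin N → ℕ) {K : ℕ} (𝒩 : Fin K → Finset (Fin N)) (ψ : Idx d → ℂ) : Prop :=
  ∃ (T : ℕ) (E : Fin T → Sop d),
    (∀ t, ∃ k, IsNeighborhoodMap d (𝒩 k) (E t)) ∧
    (∀ t, E t (proj d ψ) = proj d ψ) ∧
    (∀ σ, IsDensity d σ → seqComp E σ = proj d ψ)

/-- Robust finite-time stabilizability: any ordering of the maps prepares `ψ`. -/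
def RFTS (d : Fin N → ℕ) {K : ℕ} (𝒩 : Fin K → Finset (Fin N)) (ψ : Idx d → ℂ) : Prop :=
  ∃ (T : ℕ) (E : Fin T → Sop d),
    (∀ t, ∃ k, IsNeighborhoodMap d (𝒩 k) (E t)) ∧
    (∀ t, E t (proj d ψ) = proj d ψ) ∧
    (∀ π : Equiv.Perm (Fin T), ∀ σ, IsDensity d σ → seqComp (fun t => E (π t)) σ = proj d ψ)

/-- The Schmidt span of `ψ` on `S`: the range of the reduced state `Tr_{Sᶜ}|ψ⟩⟨ψ|`. -/
noncomputable def schmidtSpan (d : Fin N → ℕ) (S : Finset (Fin N)) (ψ : Idx d → ℂ) :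
    Submodule ℂ (SIdx d S → ℂ) :=
  LinearMap.range (Matrix.mulVecLin (ptrace d S (proj d ψ)))

/-- Slicing a global vector along a fixed index of `Sᶜ` (linear in the vector). -/
def sliceMap (d : Fin N → ℕ) (S : Finset (Fin N)) (w : SIdx d Sᶜ) :
    (Idx d → ℂ) →ₗ[ℂ] (SIdx d S → ℂ) where
  toFun v := fun u => v (merge d S u w)
  map_add' _ _ := rfl
  map_smul' _ _ := rfl

/-- The extended Schmidt span `Σ̄_S(ψ) = Σ_S(ψ) ⊗ H_{Sᶜ}`, described as the set of vectors
all of whose slices along `Sᶜ` lie in the Schmidt span. -/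
noncomputable def extSchmidtSpan (d : Fin N → ℕ) (S : Finset (Fin N)) (ψ : Idx d → ℂ) :
    Submodule ℂ (Idx d → ℂ) :=
  ⨅ w : SIdx d Sᶜ, (schmidtSpan d S ψ).comap (sliceMap d S w)

/-- `P` is the orthogonal projection matrix onto the subspace `V` (Hermitian idempotent
with range `V`). -/
def IsOrthProjOnto {ι : Type*} [Fintype ι] [DecidableEq ι]
    (P : Matrix ι ι ℂ) (V : Submodule ℂ (ι → ℂ)) : Prop :=
  Pᴴ = P ∧ P * P = P ∧ LinearMap.range P.mulVecLin = V

/-- The neighborhood expansion `A^𝒩` of a set of subsystems. -/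
def expand {K : ℕ} (𝒩 : Fin K → Finset (Fin N)) (A : Finset (Fin N)) : Finset (Fin N) :=
  Finset.univ.biUnion fun k => if (𝒩 k ∩ A).Nonempty then 𝒩 k else ∅

/-- Standard sesquilinear dot product. -/
noncomputable def dotc {ι : Type*} [Fintype ι] (u v : ι → ℂ) : ℂ :=
  ∑ a, (starRingEnd ℂ) (u a) * v a

/-- Slicing a global vector along a single site `i`, other coordinates fixed by `a`. -/
def sliceAt (d : Fin N → ℕ) (i : Fin N) (a : Idx d) :
    (Idx d → ℂ) →ₗ[ℂ] (Fin (d i) → ℂ) where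
  toFun v := fun x => v (Function.update a i x)
  map_add' _ _ := rfl
  map_smul' _ _ := rfl

/-- The tensor product `⊗ᵢ tᵢ` of local subspaces, as a subspace of the global space:
the set of vectors all of whose single-site slices lie in the local subspaces. -/
noncomputable def tensorSub (d : Fin N → ℕ) (t : ∀ i, Submodule ℂ (Fin (d i) → ℂ)) :
    Submodule ℂ (Idx d → ℂ) :=
  ⨅ i, ⨅ a : Idx d, (t i).comap (sliceAt d i a)

open Classical in
/-- The operator `X` on the `j`-th factor, amplified by the identity on all other factors. -/
noncomputable def factorMat {M : ℕ} (m : Fin M → ℕ) (j : Fin M)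
    (X : Matrix (Fin (m j)) (Fin (m j)) ℂ) :
    Matrix (∀ l, Fin (m l)) (∀ l, Fin (m l)) ℂ :=
  fun a b => if (∀ l, l ≠ j → a l = b l) then X (a j) (b j) else 0

/-- Partial trace onto a single site `i`. -/
noncomputable def ptrace1 (d : Fin N → ℕ) (i : Fin N) (M : Matrix (Idx d) (Idx d) ℂ) :
    Matrix (Fin (d i)) (Fin (d i)) ℂ :=
  fun x y => ∑ a : Idx d, if a i = x then M a (Function.update a i y) else 0

/-- Local support `H̃ᵢ`: the range of the single-site reduced state of `ψ`. -/
noncomputable def localSupp (d : Fin N → ℕ) (ψ : Idx d → ℂ) (i : Fin N) :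
    Submodule ℂ (Fin (d i) → ℂ) :=
  LinearMap.range (Matrix.mulVecLin (ptrace1 d i (proj d ψ)))

/-- Set of skew-Hermitian matrices commuting with `|ψ⟩⟨ψ|` (the Lie algebra `u_ψ`). -/
noncomputable def stabSet (d : Fin N → ℕ) (ψ : Idx d → ℂ) :
    Set (Matrix (Idx d) (Idx d) ℂ) :=
  {X | Xᴴ = -X ∧ X * proj d ψ = proj d ψ * X}

/-- The Lie algebra `u_{𝒩ₖ,ψ}` of skew-Hermitian stabilizers acting only on `S`. -/
noncomputable def nstabSet (d : Fin N → ℕ) (S : Finset (Fin N)) (ψ : Idx d → ℂ) :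
    Set (Matrix (Idx d) (Idx d) ℂ) :=
  {X | (Xᴴ = -X ∧ X * proj d ψ = proj d ψ * X) ∧ ActsOn d S X}

attribute [local instance] LieRing.ofAssociativeRing

/-- The unitary generation property: the real Lie algebra generated by the
neighborhood stabilizer algebras is the full stabilizer algebra `u_ψ`. -/
noncomputable def UnitaryGenProp (d : Fin N → ℕ) {K : ℕ} (𝒩 : Fin K → Finset (Fin N))
    (ψ : Idx d → ℂ) : Prop :=
  ((LieSubalgebra.lieSpan ℝ (Matrix (Idx d) (Idx d) ℂ)
      (⋃ k, nstabSet d (𝒩 k) ψ)) : Set (Matrix (Idx d) (Idx d) ℂ)) = stabSet d ψ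

/-- The unitary stabilizer group `U_ψ` (as a set of matrices). -/
noncomputable def uStab (d : Fin N → ℕ) (ψ : Idx d → ℂ) : Set (Matrix (Idx d) (Idx d) ℂ) :=
  {U | U ∈ Matrix.unitaryGroup (Idx d) ℂ ∧ U * proj d ψ * Uᴴ = proj d ψ}

/-- The neighborhood unitary stabilizer group `U_{𝒩ₖ,ψ}` (as a set of matrices). -/
noncomputable def uNStab (d : Fin N → ℕ) (S : Finset (Fin N)) (ψ : Idx d → ℂ) :
    Set (Matrix (Idx d) (Idx d) ℂ) :=
  {U | (U ∈ Matrix.unitaryGroup (Idx d) ℂ ∧ U * proj d ψ * Uᴴ = proj d ψ) ∧ ActsOn d S U}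

/-- `x log x` with the convention `0 log 0 = 0`. -/
noncomputable def entAux (x : ℝ) : ℝ := if x = 0 then 0 else x * Real.log x

open Classical in
/-- Von Neumann entropy of a (Hermitian) matrix. -/
noncomputable def vnEntropy {n : Type*} [Fintype n] [DecidableEq n]
    (σ : Matrix n n ℂ) : ℝ :=
  if h : σ.IsHermitian then -∑ i, entAux (h.eigenvalues i) else 0




/-! ### Auxiliary infrastructure -/

section Aux

variable {d : Fin N → ℕ} {S : Finset (Fin N)}

/-- The reindexing equivalence between `SIdx d S × SIdx d Sᶜ` and `Idx d`. -/
def mergeEquiv (d : Fin N → ℕ) (S : Finset (Fin N)) : (SIdx d S × SIdx d Sᶜ) ≃ Idx d where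
  toFun p := merge d S p.1 p.2
  invFun a := (fun i => a i, fun i => a i)
  left_inv := by
    rintro ⟨u, w⟩
    refine Prod.ext (funext fun i => ?_) (funext fun i => ?_)
    · show merge d S u w i = u i
      simp [merge, i.prop]
    · show merge d S u w i = w i
      have : (i : Fin N) ∉ S := Finset.mem_compl.mp i.prop
      simp [merge, this]
  right_inv := by
    intro a
    funext i
    by_cases h : i ∈ S <;> simp [merge, h]

/-- The matrix of slices of a global vector. -/
def Cmat (d : Fin N → ℕ) (S : Finset (Fin N)) (v : Idx d → ℂ) :
    Matrix (SIdx d S) (SIdx d Sᶜ) ℂ :=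
  fun u w => v (merge d S u w)

lemma ptrace_proj_eq (v : Idx d → ℂ) :
    ptrace d S (proj d v) = Cmat d S v * (Cmat d S v)ᴴ := by
  ext u u'
  simp [ptrace, proj, Matrix.mul_apply, Cmat, Matrix.conjTranspose_apply]

lemma vec_ext_of_cmat {v v' : Idx d → ℂ} (h : Cmat d S v = Cmat d S v') : v = v' := by
  funext a
  have := congrFun (congrFun h ((mergeEquiv d S).symm a).1) ((mergeEquiv d S).symm a).2
  simpa [Cmat, show merge d S ((mergeEquiv d S).symm a).1 ((mergeEquiv d S).symm a).2 = a from
    (mergeEquiv d S).right_inv a] using this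

lemma cmat_mulVec {A : Matrix (Idx d) (Idx d) ℂ} {Y : Matrix (SIdx d S) (SIdx d S) ℂ}
    (hA : ∀ (u u' : SIdx d S) (w w' : SIdx d Sᶜ),
      A (merge d S u w) (merge d S u' w') = if w = w' then Y u u' else 0)
    (v : Idx d → ℂ) :
    Cmat d S (A *ᵥ v) = Y * Cmat d S v := by
  ext u w
  show (A *ᵥ v) (merge d S u w) = _
  rw [Matrix.mulVec, dotProduct, ← Equiv.sum_comp (mergeEquiv d S)
    (fun a => A (merge d S u w) a * v a), Fintype.sum_prod_type]
  rw [Matrix.mul_apply]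
  refine Finset.sum_congr rfl fun u' _ => ?_
  simp only [show ∀ y, (mergeEquiv d S) (u', y) = merge d S u' y from fun _ => rfl, hA,
    ite_mul, zero_mul]
  rw [Finset.sum_ite_eq]
  simp [Cmat]

lemma cmat_smul (c : ℂ) (v : Idx d → ℂ) : Cmat d S (c • v) = c • Cmat d S v := rfl

end Aux

section Vec

variable {d : Fin N → ℕ}

lemma sum_mulVec' {m ι : Type*} [Fintype m] [Fintype ι] (M : m → Matrix ι ι ℂ) (v : ι → ℂ) :
    (∑ j, M j) *ᵥ v = ∑ j, (M j) *ᵥ v := by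
  funext a
  simp only [Matrix.mulVec, dotProduct, Matrix.sum_apply, Finset.sum_apply,
    Finset.sum_mul]
  rw [Finset.sum_comm]

lemma dotProduct_sum' {m ι : Type*} [Fintype m] [Fintype ι] (v : ι → ℂ) (w : m → ι → ℂ) :
    v ⬝ᵥ (∑ j, w j) = ∑ j, v ⬝ᵥ w j := by
  simp [dotProduct, Finset.sum_apply, Finset.mul_sum]
  rw [Finset.sum_comm]

lemma unit_dot {ψ : Idx d → ℂ} (hunit : IsUnitVec d ψ) : star ψ ⬝ᵥ ψ = 1 := by
  rw [show (1:ℂ) = ((1:ℝ):ℂ) by norm_num, ← hunit, Complex.ofReal_sum]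
  simp [dotProduct, Complex.normSq_eq_conj_mul_self]

lemma eq_dot_smul_of_orth {ι : Type*} [Fintype ι] {ψ v : ι → ℂ} (hψ : star ψ ⬝ᵥ ψ = 1)
    (h : ∀ z : ι → ℂ, star ψ ⬝ᵥ z = 0 → star z ⬝ᵥ v = 0) : v = (star ψ ⬝ᵥ v) • ψ := by
  have h1 : star ψ ⬝ᵥ (v - (star ψ ⬝ᵥ v) • ψ) = 0 := by
    rw [dotProduct_sub, dotProduct_smul, hψ]
    simp
  have h2 := h _ h1
  have h3 : star (v - (star ψ ⬝ᵥ v) • ψ) ⬝ᵥ ψ = 0 := by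
    rw [Matrix.star_dotProduct, h1, star_zero]
  have h4 : star (v - (star ψ ⬝ᵥ v) • ψ) ⬝ᵥ (v - (star ψ ⬝ᵥ v) • ψ) = 0 := by
    rw [dotProduct_sub, dotProduct_smul, h2, h3]
    simp
  exact sub_eq_zero.mp (dotProduct_star_self_eq_zero.mp h4)

lemma proj_mulVec (v y : Idx d → ℂ) : proj d v *ᵥ y = (star v ⬝ᵥ y) • v := by
  funext a
  show ∑ b, (v a * (starRingEnd ℂ) (v b)) * y b = _
  simp only [Pi.smul_apply, smul_eq_mul, dotProduct, Finset.sum_mul, Pi.star_apply,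
    Complex.star_def]
  exact Finset.sum_congr rfl fun b _ => by ring

lemma proj_posSemidef (v : Idx d → ℂ) : (proj d v).PosSemidef := by
  refine Matrix.PosSemidef.of_dotProduct_mulVec_nonneg ?_ ?_
  · ext a b
    show (starRingEnd ℂ) (v b * (starRingEnd ℂ) (v a)) = v a * (starRingEnd ℂ) (v b)
    rw [map_mul, Complex.conj_conj]
    ring
  · intro x
    have : star x ⬝ᵥ proj d v *ᵥ x
        = ((Complex.normSq (star v ⬝ᵥ x) : ℝ) : ℂ) := by
      have hx : star x ⬝ᵥ v = star (star v ⬝ᵥ x) := Matrix.star_dotProduct x v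
      rw [proj_mulVec, dotProduct_smul, hx, Complex.normSq_eq_conj_mul_self]
      simp only [smul_eq_mul, starRingEnd_apply]
      ring
    rw [this]
    exact_mod_cast Complex.normSq_nonneg _

lemma trace_proj (v : Idx d → ℂ) : (proj d v).trace = star v ⬝ᵥ v := by
  simp [Matrix.trace, Matrix.diag, proj, dotProduct, mul_comm]

lemma mul_proj_mul_conjTranspose (Km : Matrix (Idx d) (Idx d) ℂ) (v : Idx d → ℂ) :
    Km * proj d v * Kmᴴ = proj d (Km *ᵥ v) := by
  ext a b
  simp only [Matrix.mul_apply, Matrix.conjTranspose_apply, proj, Matrix.mulVec,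
    dotProduct, map_sum, map_mul, Finset.sum_mul, Finset.mul_sum, Complex.star_def]
  exact Finset.sum_congr rfl fun x _ => Finset.sum_congr rfl fun y _ => by ring

lemma proj_smul (c : ℂ) (v : Idx d → ℂ) :
    proj d (c • v) = (c * (starRingEnd ℂ) c) • proj d v := by
  ext a b
  simp [proj]
  ring

lemma kraus_mulVec_mem_span {m : ℕ} {K : Fin m → Matrix (Idx d) (Idx d) ℂ}
    {ρ : Matrix (Idx d) (Idx d) ℂ} {ψ : Idx d → ℂ}
    (hψ : star ψ ⬝ᵥ ψ = 1) (hρ : ρ.PosSemidef)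
    (hout : ∑ i, K i * ρ * (K i)ᴴ = proj d ψ) (i : Fin m) (y : Idx d → ℂ) :
    ∃ c : ℂ, K i *ᵥ (ρ *ᵥ y) = c • ψ := by
  refine ⟨star ψ ⬝ᵥ (K i *ᵥ (ρ *ᵥ y)), eq_dot_smul_of_orth hψ fun z hz => ?_⟩
  have hzψ : star z ⬝ᵥ ψ = 0 := by rw [Matrix.star_dotProduct, hz, star_zero]
  have hsum : ∑ j, star z ⬝ᵥ ((K j * ρ * (K j)ᴴ) *ᵥ z) = 0 := by
    rw [← dotProduct_sum', ← sum_mulVec', hout, proj_mulVec, dotProduct_smul, hzψ,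
      smul_zero]
  have hterm : star z ⬝ᵥ ((K i * ρ * (K i)ᴴ) *ᵥ z) = 0 := by
    have hnn : ∀ j ∈ Finset.univ, (0:ℂ) ≤ star z ⬝ᵥ ((K j * ρ * (K j)ᴴ) *ᵥ z) :=
      fun j _ => (hρ.mul_mul_conjTranspose_same (K j)).dotProduct_mulVec_nonneg z
    exact (Finset.sum_eq_zero_iff_of_nonneg hnn).mp hsum i (Finset.mem_univ i)
  have h1 : star ((K i)ᴴ *ᵥ z) ⬝ᵥ (ρ *ᵥ ((K i)ᴴ *ᵥ z)) = 0 := by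
    rw [← hterm]
    rw [Matrix.star_mulVec, Matrix.conjTranspose_conjTranspose, Matrix.mulVec_mulVec,
      ← Matrix.dotProduct_mulVec, Matrix.mulVec_mulVec, ← mul_assoc]
  have h2 : ρ *ᵥ ((K i)ᴴ *ᵥ z) = 0 := (hρ.dotProduct_mulVec_zero_iff _).mp h1
  have h3 : star z ᵥ* (K i * ρ) = 0 := by
    have : star (star z ᵥ* (K i * ρ)) = 0 := by
      rw [Matrix.star_vecMul, star_star, Matrix.conjTranspose_mul,
        ← Matrix.mulVec_mulVec, hρ.isHermitian.eq, h2]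
    have := congrArg star this
    rwa [star_star, star_zero] at this
  rw [Matrix.mulVec_mulVec, Matrix.dotProduct_mulVec, h3, zero_dotProduct]

lemma sum_dot_kraus {m : ℕ} {K : Fin m → Matrix (Idx d) (Idx d) ℂ}
    (hsum : ∑ i, (K i)ᴴ * K i = 1) (v v' : Idx d → ℂ) :
    ∑ i, star (K i *ᵥ v) ⬝ᵥ (K i *ᵥ v') = star v ⬝ᵥ v' := by
  have h : ∀ i, star (K i *ᵥ v) ⬝ᵥ (K i *ᵥ v') = star v ⬝ᵥ (((K i)ᴴ * K i) *ᵥ v') := by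
    intro i
    rw [Matrix.star_mulVec, Matrix.dotProduct_mulVec, Matrix.dotProduct_mulVec,
      Matrix.vecMul_vecMul]
  simp only [h]
  rw [← dotProduct_sum', ← sum_mulVec', hsum, Matrix.one_mulVec]

end Vec

section Maps

variable {d : Fin N → ℕ}

lemma isDensity_proj {ψ : Idx d → ℂ} (hψ : star ψ ⬝ᵥ ψ = 1) : IsDensity d (proj d ψ) :=
  ⟨proj_posSemidef ψ, by rw [trace_proj, hψ]⟩

lemma cptp_density {E : Sop d} (hE : IsCPTP d E) {σ} (hσ : IsDensity d σ) :
    IsDensity d (E σ) := by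
  obtain ⟨m, K, hEq, hsum⟩ := hE
  constructor
  · rw [hEq]
    refine Finset.sum_induction _ _ (fun A B hA hB => hA.add hB) Matrix.PosSemidef.zero ?_
    exact fun i _ => hσ.1.mul_mul_conjTranspose_same (K i)
  · rw [hEq, Matrix.trace_sum]
    have h : ∀ i, (K i * σ * (K i)ᴴ).trace = ((K i)ᴴ * K i * σ).trace := fun i =>
      Matrix.trace_mul_cycle (K i) σ (K i)ᴴ
    rw [Finset.sum_congr rfl fun i _ => h i, ← Matrix.trace_sum,
      show ∑ i, (K i)ᴴ * K i * σ = (∑ i, (K i)ᴴ * K i) * σ from (Finset.sum_mul ..).symm,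
      hsum, one_mul, hσ.2]

lemma seqComp_density : ∀ {T : ℕ} (E : Fin T → Sop d), (∀ t, IsCPTP d (E t)) →
    ∀ σ, IsDensity d σ → IsDensity d (seqComp E σ) := by
  intro T
  induction T with
  | zero => exact fun E _ σ hσ => hσ
  | succ T ih =>
    intro E hC σ hσ
    exact cptp_density (hC (Fin.last T)) (ih _ (fun t => hC _) σ hσ)

lemma single_unit (a : Idx d) : star (Pi.single a 1 : Idx d → ℂ) ⬝ᵥ Pi.single a 1 = 1 := by
  simp [dotProduct, Pi.single_apply]

lemma exists_collapse {ψ : Idx d → ℂ} (hdim : 2 ≤ Fintype.card (Idx d)) :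
    ∀ {T : ℕ} (E : Fin T → Sop d), (∀ t, IsCPTP d (E t)) →
    (∀ σ, IsDensity d σ → seqComp E σ = proj d ψ) →
    ∃ t ρ, IsDensity d ρ ∧ ρ ≠ proj d ψ ∧ E t ρ = proj d ψ := by
  intro T
  induction T with
  | zero =>
    intro E hC hall
    exfalso
    obtain ⟨a, b, hab⟩ :=
      Fintype.exists_pair_of_one_lt_card (by omega : 1 < Fintype.card (Idx d))
    have ha := hall (proj d (Pi.single a 1)) (isDensity_proj (single_unit a))
    have hb := hall (proj d (Pi.single b 1)) (isDensity_proj (single_unit b))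
    have : proj d (Pi.single a 1) = proj d (Pi.single b 1) := by
      have h1 : seqComp E (proj d (Pi.single a 1)) = proj d (Pi.single a 1) := rfl
      have h2 : seqComp E (proj d (Pi.single b 1)) = proj d (Pi.single b 1) := rfl
      rw [h1] at ha; rw [h2] at hb; rw [ha, hb]
    have := congrFun (congrFun this a) a
    simp [proj, Pi.single_apply, hab] at this
  | succ T ih =>
    intro E hC hall
    by_cases h : ∀ σ, IsDensity d σ → seqComp (fun t => E t.castSucc) σ = proj d ψ
    · obtain ⟨t, ρ, h1, h2, h3⟩ := ih (fun t => E t.castSucc) (fun t => hC _) h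
      exact ⟨t.castSucc, ρ, h1, h2, h3⟩
    · push_neg at h
      obtain ⟨σ, hσ, hne⟩ := h
      refine ⟨Fin.last T, seqComp (fun t => E t.castSucc) σ,
        seqComp_density _ (fun t => hC _) σ hσ, hne, ?_⟩
      exact hall σ hσ

lemma exists_col_not_mem_span {ρ : Matrix (Idx d) (Idx d) ℂ} {ψ : Idx d → ℂ}
    (hψ : star ψ ⬝ᵥ ψ = 1) (hherm : ρ.IsHermitian) (htr : ρ.trace = 1)
    (hne : ρ ≠ proj d ψ) :
    ∃ y : Idx d → ℂ, ρ *ᵥ y ∉ Submodule.span ℂ {ψ} := by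
  by_contra hcol
  push_neg at hcol
  apply hne
  have hcol' : ∀ b, ∃ cc : ℂ, (fun a => ρ a b) = cc • ψ := by
    intro b
    obtain ⟨cc, hc⟩ := Submodule.mem_span_singleton.mp (hcol (Pi.single b 1))
    refine ⟨cc, ?_⟩
    rw [hc]
    funext a
    simp [Matrix.mulVec_single]
  choose c hc using hcol'
  have hab : ∀ a b, ρ a b = c b * ψ a := fun a b => by
    have := congrFun (hc b) a
    simpa using this
  have hab2 : ∀ a b, ρ a b = (starRingEnd ℂ) (c a) * (starRingEnd ℂ) (ψ b) := by
    intro a b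
    have h1 : star (ρ b a) = ρ a b := hherm.apply a b
    rw [← h1, hab b a, star_mul]
    simp only [Complex.star_def]
    ring
  have hcb : ∀ b, c b = (starRingEnd ℂ) (∑ a, ψ a * c a) * (starRingEnd ℂ) (ψ b) := by
    intro b
    have e1 : ∑ a, (starRingEnd ℂ) (ψ a) * ρ a b = c b := by
      simp only [fun a => hab a b]
      rw [show ∑ a, (starRingEnd ℂ) (ψ a) * (c b * ψ a)
          = c b * ∑ a, (starRingEnd ℂ) (ψ a) * ψ a by
        rw [Finset.mul_sum]; exact Finset.sum_congr rfl fun a _ => by ring]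
      rw [show ∑ a, (starRingEnd ℂ) (ψ a) * ψ a = star ψ ⬝ᵥ ψ from rfl, hψ, mul_one]
    have e2 : ∑ a, (starRingEnd ℂ) (ψ a) * ρ a b
        = (starRingEnd ℂ) (∑ a, ψ a * c a) * (starRingEnd ℂ) (ψ b) := by
      rw [show ∑ a, (starRingEnd ℂ) (ψ a) * ρ a b
          = ∑ a, (starRingEnd ℂ) (ψ a) * ((starRingEnd ℂ) (c a) * (starRingEnd ℂ) (ψ b)) from
        Finset.sum_congr rfl fun a _ => by rw [hab2 a b]]
      rw [map_sum, Finset.sum_mul]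
      exact Finset.sum_congr rfl fun a _ => by rw [map_mul]; ring
    rw [← e1, e2]
  have htr1 : (starRingEnd ℂ) (∑ a, ψ a * c a) = 1 := by
    have e3 : ρ.trace = (starRingEnd ℂ) (∑ a, ψ a * c a) * (star ψ ⬝ᵥ ψ) := by
      show ∑ b, ρ b b = _
      calc ∑ b, ρ b b
          = ∑ b, (starRingEnd ℂ) (∑ a, ψ a * c a) * ((starRingEnd ℂ) (ψ b) * ψ b) :=
            Finset.sum_congr rfl fun b _ => by rw [hab b b, hcb b]; ring
        _ = (starRingEnd ℂ) (∑ a, ψ a * c a) * ∑ b, (starRingEnd ℂ) (ψ b) * ψ b :=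
            (Finset.mul_sum ..).symm
        _ = _ := by
            rw [show ∑ b, (starRingEnd ℂ) (ψ b) * ψ b = star ψ ⬝ᵥ ψ from rfl]
    rw [htr, hψ, mul_one] at e3
    exact e3.symm
  ext a b
  rw [hab a b, hcb b, htr1, one_mul]
  show _ = ψ a * (starRingEnd ℂ) (ψ b)
  ring

end Maps

section Nbhd

variable {d : Fin N → ℕ} {S : Finset (Fin N)}

lemma rank_smul_eq {ι κ : Type*} [Fintype ι] [Fintype κ] {c : ℂ} (hc : c ≠ 0)
    (M : Matrix ι κ ℂ) : (c • M).rank = M.rank := by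
  have h : LinearMap.range (c • M).mulVecLin = LinearMap.range M.mulVecLin := by
    ext x
    constructor
    · rintro ⟨v, rfl⟩
      exact ⟨c • v, by
        rw [Matrix.mulVecLin_apply, Matrix.mulVecLin_apply, Matrix.mulVec_smul,
          Matrix.smul_mulVec]⟩
    · rintro ⟨v, rfl⟩
      refine ⟨c⁻¹ • v, by
        rw [Matrix.mulVecLin_apply, Matrix.mulVecLin_apply, Matrix.mulVec_smul,
          Matrix.smul_mulVec, smul_smul, inv_mul_cancel₀ hc, one_smul]⟩
  unfold Matrix.rank
  rw [h]

lemma range_ptrace_proj (ψ : Idx d → ℂ) :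
    LinearMap.range (Matrix.mulVecLin (ptrace d S (proj d ψ)))
      = LinearMap.range (Matrix.mulVecLin (Cmat d S ψ)) := by
  rw [ptrace_proj_eq]
  refine Submodule.eq_of_le_of_finrank_eq ?_ ?_
  · rintro x ⟨v, rfl⟩
    exact ⟨(Cmat d S ψ)ᴴ *ᵥ v, by
      rw [Matrix.mulVecLin_apply, Matrix.mulVecLin_apply, Matrix.mulVec_mulVec]⟩
  · exact Matrix.rank_self_mul_conjTranspose (Cmat d S ψ)

lemma mem_extSchmidtSpan_iff {ψ v : Idx d → ℂ} :
    v ∈ extSchmidtSpan d S ψ ↔ ∀ w, sliceMap d S w v ∈ schmidtSpan d S ψ := by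
  simp [extSchmidtSpan, Submodule.mem_iInf, Submodule.mem_comap]

lemma sliceMap_eq_cmat_col (v : Idx d → ℂ) (w : SIdx d Sᶜ) :
    sliceMap d S w v = Cmat d S v *ᵥ Pi.single w 1 := by
  funext u
  rw [Matrix.mulVec_single]
  simp [sliceMap, Cmat]

lemma psi_mem_extSchmidtSpan (ψ : Idx d → ℂ) : ψ ∈ extSchmidtSpan d S ψ := by
  rw [mem_extSchmidtSpan_iff]
  intro w
  show _ ∈ LinearMap.range (Matrix.mulVecLin (ptrace d S (proj d ψ)))
  rw [range_ptrace_proj]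
  exact ⟨Pi.single w 1, (sliceMap_eq_cmat_col ψ w).symm⟩

lemma neighborhood_fix {Kr : Matrix (Idx d) (Idx d) ℂ}
    {Y : Matrix (SIdx d S) (SIdx d S) ℂ} {ψ v : Idx d → ℂ} {c : ℂ}
    (hKY : ∀ (u u' : SIdx d S) (w w' : SIdx d Sᶜ),
      Kr (merge d S u w) (merge d S u' w') = if w = w' then Y u u' else 0)
    (hKψ : Kr *ᵥ ψ = c • ψ) (hv : v ∈ extSchmidtSpan d S ψ) :
    Kr *ᵥ v = c • v := by
  have hY : Y * Cmat d S ψ = c • Cmat d S ψ := by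
    rw [← cmat_mulVec hKY, hKψ, cmat_smul]
  have key : ∀ w : SIdx d Sᶜ, Y *ᵥ (sliceMap d S w v) = c • (sliceMap d S w v) := by
    intro w
    have hs := (mem_extSchmidtSpan_iff.mp hv) w
    rw [show schmidtSpan d S ψ
        = LinearMap.range (Matrix.mulVecLin (Cmat d S ψ * (Cmat d S ψ)ᴴ)) by
      rw [schmidtSpan, ptrace_proj_eq]] at hs
    obtain ⟨y, hy⟩ := hs
    rw [Matrix.mulVecLin_apply] at hy
    rw [← hy, Matrix.mulVec_mulVec, ← Matrix.mul_assoc, hY, Matrix.smul_mul,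
      Matrix.smul_mulVec]
  apply vec_ext_of_cmat (S := S)
  rw [cmat_mulVec hKY, cmat_smul]
  ext u w
  have h1 := congrFun (key w) u
  simp only [Matrix.mulVec, dotProduct, sliceMap, Pi.smul_apply, smul_eq_mul,
    LinearMap.coe_mk, AddHom.coe_mk] at h1
  simpa [Matrix.mul_apply, Cmat, Matrix.smul_apply, smul_eq_mul] using h1

lemma kraus_fix_psi {m : ℕ} {Kr : Fin m → Matrix (Idx d) (Idx d) ℂ} {ψ : Idx d → ℂ}
    (hψ : star ψ ⬝ᵥ ψ = 1)
    (hout : ∑ i, Kr i * proj d ψ * (Kr i)ᴴ = proj d ψ) (i : Fin m) :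
    ∃ c : ℂ, Kr i *ᵥ ψ = c • ψ := by
  obtain ⟨c, hc⟩ := kraus_mulVec_mem_span hψ (proj_posSemidef ψ) hout i ψ
  refine ⟨c, ?_⟩
  rw [← hc, proj_mulVec, hψ, one_smul]

lemma nmap_fix_proj {E : Sop d} (hE : IsNeighborhoodMap d S E) {ψ : Idx d → ℂ}
    (hψ : star ψ ⬝ᵥ ψ = 1) (hfix : E (proj d ψ) = proj d ψ)
    {v : Idx d → ℂ} (hv : v ∈ extSchmidtSpan d S ψ) : E (proj d v) = proj d v := by
  obtain ⟨m, Kr, hacts, hEq, hsum⟩ := hE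
  have hout : ∑ i, Kr i * proj d ψ * (Kr i)ᴴ = proj d ψ := by rw [← hEq]; exact hfix
  choose c hc using fun i => kraus_fix_psi hψ hout i
  have hKv : ∀ i, Kr i *ᵥ v = c i • v := fun i => by
    obtain ⟨Y, hY⟩ := hacts i
    exact neighborhood_fix hY (hc i) hv
  have hsum1 : ∑ i, (starRingEnd ℂ) (c i) * c i = 1 := by
    have h1 := sum_dot_kraus hsum ψ ψ
    rw [hψ] at h1
    rw [← h1]
    refine Finset.sum_congr rfl fun i _ => ?_
    rw [hc i, star_smul, smul_dotProduct, dotProduct_smul, hψ]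
    rw [smul_eq_mul, smul_eq_mul, mul_one, starRingEnd_apply]
  rw [hEq]
  calc ∑ i, Kr i * proj d v * (Kr i)ᴴ
      = ∑ i, (c i * (starRingEnd ℂ) (c i)) • proj d v := by
        refine Finset.sum_congr rfl fun i _ => ?_
        rw [mul_proj_mul_conjTranspose, hKv i, proj_smul]
    _ = proj d v := by
        rw [← Finset.sum_smul,
          show ∑ i, c i * (starRingEnd ℂ) (c i) = 1 from by
            rw [← hsum1]; exact Finset.sum_congr rfl fun i _ => mul_comm _ _,
          one_smul]

lemma seqComp_fix {V : Type*} [AddCommMonoid V] [Module ℂ V] :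
    ∀ {T : ℕ} (E : Fin T → (V →ₗ[ℂ] V)) (X : V), (∀ t, E t X = X) → seqComp E X = X := by
  intro T
  induction T with
  | zero => exact fun E X h => rfl
  | succ T ih =>
    intro E X h
    show E (Fin.last T) (seqComp (fun t => E t.castSucc) X) = X
    rw [ih _ X (fun t => h _), h _]

lemma dot_self_eq_normSq {ι : Type*} [Fintype ι] (v : ι → ℂ) :
    star v ⬝ᵥ v = ((∑ a, Complex.normSq (v a) : ℝ) : ℂ) := by
  rw [Complex.ofReal_sum]
  simp [dotProduct, Complex.normSq_eq_conj_mul_self]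

end Nbhd

/-- Theorem 2, small Schmidt span condition: if a unit vector `ψ` in a
multipartite space of dimension at least 2 is finite-time stabilizable with respect to the
neighborhood structure `𝒩`, then (i) `span(ψ) = ⋂ₖ Σ̄_{𝒩ₖ}(ψ)` and (ii) some neighborhood
satisfies `2 dim Σ_{𝒩ₖ}(ψ) ≤ dim H_{𝒩ₖ}`. -/
theorem fts_necessary_small_schmidt_span {N K : ℕ} (d : Fin N → ℕ)
    (𝒩 : Fin K → Finset (Fin N)) (ψ : Idx d → ℂ)
    (hunit : IsUnitVec d ψ) (hdim : 2 ≤ Fintype.card (Idx d))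
    (hFTS : FTS d 𝒩 ψ) :
    (Submodule.span ℂ {ψ} = ⨅ k, extSchmidtSpan d (𝒩 k) ψ) ∧
    (∃ k, 2 * Module.finrank ℂ (schmidtSpan d (𝒩 k) ψ) ≤ Fintype.card (SIdx d (𝒩 k))) := by
  obtain ⟨T, E, hnb, hfix, hall⟩ := hFTS
  have hψ1 : star ψ ⬝ᵥ ψ = 1 := unit_dot hunit
  constructor
  · -- Part (i)
    apply le_antisymm
    · rw [Submodule.span_le, Set.singleton_subset_iff, SetLike.mem_coe, Submodule.mem_iInf]
      exact fun k => psi_mem_extSchmidtSpan ψ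
    · intro v hv
      rw [Submodule.mem_iInf] at hv
      by_cases hv0 : v = 0
      · rw [hv0]; exact Submodule.zero_mem _
      have hfixv : ∀ t, E t (proj d v) = proj d v := fun t => by
        obtain ⟨k, hk⟩ := hnb t
        exact nmap_fix_proj hk hψ1 (hfix t) (hv k)
      have hseq : seqComp E (proj d v) = proj d v := seqComp_fix E _ hfixv
      set nr : ℝ := ∑ a, Complex.normSq (v a) with hnr
      have hnrpos : 0 < nr := by
        rcases Function.ne_iff.mp hv0 with ⟨b0, hb0⟩
        have hpos : 0 < Complex.normSq (v b0) := Complex.normSq_pos.mpr hb0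
        exact lt_of_lt_of_le hpos (Finset.single_le_sum
          (fun a _ => Complex.normSq_nonneg (v a)) (Finset.mem_univ b0))
      set s : ℂ := (((Real.sqrt nr)⁻¹ : ℝ) : ℂ) with hs
      have hunit' : IsUnitVec d (s • v) := by
        show ∑ a, Complex.normSq ((s • v) a) = 1
        have hterm : ∀ a, Complex.normSq ((s • v) a)
            = (Real.sqrt nr)⁻¹ * (Real.sqrt nr)⁻¹ * Complex.normSq (v a) := by
          intro a
          rw [Pi.smul_apply, smul_eq_mul, Complex.normSq_mul, hs, Complex.normSq_ofReal]
        rw [Finset.sum_congr rfl fun a _ => hterm a, ← Finset.mul_sum, ← hnr,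
          ← Real.sqrt_mul_self hnrpos.le]
        have hsqrt : Real.sqrt nr ≠ 0 := by positivity
        rw [← mul_inv, Real.mul_self_sqrt (Real.sqrt_nonneg _),
          inv_mul_cancel₀ (Real.sqrt_pos.mpr (mul_pos hnrpos hnrpos)).ne']
      have h2 := hall _ (isDensity_proj (unit_dot hunit'))
      have h3 : proj d (s • v) = (s * s) • proj d v := by
        rw [proj_smul, hs, Complex.conj_ofReal]
      rw [h3, map_smul, hseq] at h2
      -- h2 : (s*s) • proj d v = proj d ψ
      have hs0 : s ≠ 0 := by
        rw [hs]
        simp only [ne_eq, Complex.ofReal_eq_zero, inv_eq_zero]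
        positivity
      rcases Function.ne_iff.mp hv0 with ⟨b0, hb0⟩
      have hentry : ∀ a, (s * s) * (v a * (starRingEnd ℂ) (v b0))
          = ψ a * (starRingEnd ℂ) (ψ b0) := by
        intro a
        have := congrFun (congrFun h2 a) b0
        simpa [proj, Matrix.smul_apply, smul_eq_mul] using this
      have hvb0 : (starRingEnd ℂ) (v b0) ≠ 0 := by
        simpa using hb0
      refine Submodule.mem_span_singleton.mpr
        ⟨(starRingEnd ℂ) (ψ b0) * ((s * s) * (starRingEnd ℂ) (v b0))⁻¹, funext fun a => ?_⟩
      have h := hentry a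
      rw [Pi.smul_apply, smul_eq_mul]
      have hne : (s * s) * (starRingEnd ℂ) (v b0) ≠ 0 :=
        mul_ne_zero (mul_ne_zero hs0 hs0) hvb0
      have hva : v a = ψ a * (starRingEnd ℂ) (ψ b0) * ((s * s) * (starRingEnd ℂ) (v b0))⁻¹ := by
        rw [eq_mul_inv_iff_mul_eq₀ hne]
        linear_combination h
      rw [hva]
      ring
  · -- Part (ii)
    have hC : ∀ t, IsCPTP d (E t) := fun t => by
      obtain ⟨k, m, Kr, _, hEq, hsum⟩ := hnb t
      exact ⟨m, Kr, hEq, hsum⟩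
    obtain ⟨t, ρ, hρdens, hρne, hρout⟩ := exists_collapse hdim E hC hall
    obtain ⟨k, m, Kr, hacts, hEq, hsum⟩ := hnb t
    refine ⟨k, ?_⟩
    set S := 𝒩 k with hSdef
    have hout : ∑ i, Kr i * ρ * (Kr i)ᴴ = proj d ψ := by rw [← hEq]; exact hρout
    obtain ⟨y, hy⟩ := exists_col_not_mem_span hψ1 hρdens.1.1 hρdens.2 hρne
    choose α hα using fun i => kraus_mulVec_mem_span hψ1 hρdens.1 hout i y
    have houtψ : ∑ i, Kr i * proj d ψ * (Kr i)ᴴ = proj d ψ := by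
      rw [← hEq]; exact hfix t
    choose cψ hcψ using fun i => kraus_fix_psi hψ1 houtψ i
    set x : Idx d → ℂ := ρ *ᵥ y with hxdef
    set β : ℂ := star ψ ⬝ᵥ x with hβ
    set φv : Idx d → ℂ := x - β • ψ with hφdef
    have hφ0 : φv ≠ 0 := by
      intro h
      apply hy
      have hxx : x = β • ψ := sub_eq_zero.mp h
      rw [hxx]
      exact Submodule.smul_mem _ _ (Submodule.mem_span_singleton_self ψ)
    set a : Fin m → ℂ := fun i => α i - β * cψ i with ha
    have hKφ : ∀ i, Kr i *ᵥ φv = a i • ψ := by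
      intro i
      rw [hφdef, Matrix.mulVec_sub, Matrix.mulVec_smul, hα i, hcψ i, smul_smul, ← sub_smul]
    have hψφ : star ψ ⬝ᵥ φv = 0 := by
      rw [hφdef, dotProduct_sub, dotProduct_smul, hψ1, ← hβ]
      simp
    have horth : ∑ i, (starRingEnd ℂ) (cψ i) * a i = 0 := by
      have h1 := sum_dot_kraus hsum ψ φv
      rw [hψφ] at h1
      rw [← h1]
      refine Finset.sum_congr rfl fun i _ => ?_
      rw [hcψ i, hKφ i, star_smul, smul_dotProduct, dotProduct_smul, hψ1]
      rw [smul_eq_mul, smul_eq_mul, mul_one, starRingEnd_apply]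
    set nφ : ℂ := star φv ⬝ᵥ φv with hnφdef
    have hnφ : nφ ≠ 0 := fun h => hφ0 (dotProduct_star_self_eq_zero.mp h)
    have hnorm : ∑ i, (starRingEnd ℂ) (a i) * a i = nφ := by
      have h1 := sum_dot_kraus hsum φv φv
      rw [hnφdef, ← h1]
      refine Finset.sum_congr rfl fun i _ => ?_
      rw [hKφ i, star_smul, smul_dotProduct, dotProduct_smul, hψ1]
      rw [smul_eq_mul, smul_eq_mul, mul_one, starRingEnd_apply]
    set A : Matrix (Idx d) (Idx d) ℂ := ∑ i, (starRingEnd ℂ) (a i) • Kr i with hA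
    choose Ys hYs using hacts
    set Y : Matrix (SIdx d S) (SIdx d S) ℂ := ∑ i, (starRingEnd ℂ) (a i) • Ys i with hYdef
    have hAY : ∀ (u u' : SIdx d S) (w w' : SIdx d Sᶜ),
        A (merge d S u w) (merge d S u' w') = if w = w' then Y u u' else 0 := by
      intro u u' w w'
      calc A (merge d S u w) (merge d S u' w')
          = ∑ i, (starRingEnd ℂ) (a i) * Kr i (merge d S u w) (merge d S u' w') := by
            rw [hA]
            simp [Matrix.sum_apply]
        _ = ∑ i, (starRingEnd ℂ) (a i) * (if w = w' then Ys i u u' else 0) :=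
            Finset.sum_congr rfl fun i _ => by rw [hYs i u u' w w']
        _ = if w = w' then Y u u' else 0 := by
            by_cases h : w = w' <;> simp [h, hYdef, Matrix.sum_apply]
    have hAmul : ∀ u : Idx d → ℂ, A *ᵥ u = ∑ i, (starRingEnd ℂ) (a i) • (Kr i *ᵥ u) := by
      intro u
      rw [hA, sum_mulVec']
      exact Finset.sum_congr rfl fun i _ => Matrix.smul_mulVec _ _ _
    have hAψ : A *ᵥ ψ = 0 := by
      rw [hAmul ψ, Finset.sum_congr rfl fun i _ => by rw [hcψ i, smul_smul], ← Finset.sum_smul]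
      have hz : ∑ i, (starRingEnd ℂ) (a i) * cψ i = 0 := by
        calc ∑ i, (starRingEnd ℂ) (a i) * cψ i
            = ∑ i, (starRingEnd ℂ) ((starRingEnd ℂ) (cψ i) * a i) :=
              Finset.sum_congr rfl fun i _ => by rw [map_mul, Complex.conj_conj]; ring
          _ = (starRingEnd ℂ) (∑ i, (starRingEnd ℂ) (cψ i) * a i) := (map_sum _ _ _).symm
          _ = 0 := by rw [horth, map_zero]
      rw [hz, zero_smul]
    have hAφ : A *ᵥ φv = nφ • ψ := by
      rw [hAmul φv, Finset.sum_congr rfl fun i _ => by rw [hKφ i, smul_smul], ← Finset.sum_smul,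
        hnorm]
    have hCAψ : Y * Cmat d S ψ = 0 := by
      have h := cmat_mulVec hAY ψ
      rw [hAψ] at h
      rw [← h]
      ext u w
      simp [Cmat]
    have hCAφ : Y * Cmat d S φv = nφ • Cmat d S ψ := by
      have h := cmat_mulVec hAY φv
      rw [hAφ, cmat_smul] at h
      exact h.symm
    have hfr : Module.finrank ℂ ↥(schmidtSpan d S ψ) = (Cmat d S ψ * (Cmat d S ψ)ᴴ).rank := by
      rw [schmidtSpan, ptrace_proj_eq]
      rfl
    have e1 : (nφ * (starRingEnd ℂ) nφ) • (Cmat d S ψ * (Cmat d S ψ)ᴴ)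
        = (Y * Cmat d S φv) * (Y * Cmat d S φv)ᴴ := by
      rw [hCAφ, Matrix.conjTranspose_smul, Matrix.smul_mul, Matrix.mul_smul, smul_smul,
        starRingEnd_apply]
    have hnφc : (starRingEnd ℂ) nφ ≠ 0 := fun h => hnφ (by
      have := congrArg (starRingEnd ℂ) h
      rwa [Complex.conj_conj, map_zero] at this)
    have hnφ2 : nφ * (starRingEnd ℂ) nφ ≠ 0 := mul_ne_zero hnφ hnφc
    have h1 : (Cmat d S ψ * (Cmat d S ψ)ᴴ).rank ≤ Y.rank := by
      rw [← rank_smul_eq hnφ2 (Cmat d S ψ * (Cmat d S ψ)ᴴ), e1]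
      exact le_trans (Matrix.rank_mul_le_left _ _) (Matrix.rank_mul_le_left _ _)
    have h2 : (Cmat d S ψ * (Cmat d S ψ)ᴴ).rank
        ≤ Module.finrank ℂ ↥(LinearMap.ker Y.mulVecLin) := by
      have hle : LinearMap.range (Cmat d S ψ * (Cmat d S ψ)ᴴ).mulVecLin
          ≤ LinearMap.ker Y.mulVecLin := by
        rintro xv ⟨u, rfl⟩
        rw [LinearMap.mem_ker, Matrix.mulVecLin_apply, Matrix.mulVecLin_apply,
          Matrix.mulVec_mulVec, ← Matrix.mul_assoc, hCAψ, Matrix.zero_mul,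
          Matrix.zero_mulVec]
      exact Submodule.finrank_mono hle
    have h3 : Y.rank + Module.finrank ℂ ↥(LinearMap.ker Y.mulVecLin)
        = Fintype.card (SIdx d S) := by
      have h := LinearMap.finrank_range_add_finrank_ker Y.mulVecLin
      rw [Module.finrank_pi] at h
      exact h
    rw [hfr]
    omega

end QLS
end

section
/- Let ψ ∈ H be a unit vector that is RFTS with respect to a neighborhood structure 𝒩. For A ⊆ {1,…,N}, define the neighborhood expansion A^𝒩 = ⋃{𝒩_k ∈ 𝒩 : 𝒩_k ∩ A ≠ ∅}. If A, B ⊆ {1,…,N} satisfy A^𝒩 ∩ B^𝒩 = ∅, then for every matrix X on H acting only on A and every matrix Y on H acting only on B: Tr(X Y |ψ⟩⟨ψ|) = Tr(X |ψ⟩⟨ψ|) · Tr(Y |ψ⟩⟨ψ|). -/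
open scoped BigOperators Matrix ComplexOrder

namespace QLS

variable {N : ℕ}

attribute [local instance 100] LieRing.ofAssociativeRing

lemma seqComp_split {V : Type*} [AddCommMonoid V] [Module ℂ V] :
    ∀ (b a : ℕ) (F : Fin (a + b) → (V →ₗ[ℂ] V)),
      seqComp F = (seqComp fun j : Fin b => F (Fin.natAdd a j)) ∘ₗ
        (seqComp fun i : Fin a => F (Fin.castAdd b i))
  | 0, a, F => by
      have h0 : (seqComp fun j : Fin 0 => F (Fin.natAdd a j)) = LinearMap.id := rfl
      rw [h0, LinearMap.id_comp]
      rfl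
  | b + 1, a, F => by
      have h1 : seqComp F = F (Fin.last (a + b)) ∘ₗ seqComp (fun t : Fin (a + b) => F t.castSucc) := rfl
      have h2 : (seqComp fun j : Fin (b+1) => F (Fin.natAdd a j))
          = F (Fin.natAdd a (Fin.last b)) ∘ₗ seqComp (fun j : Fin b => F (Fin.natAdd a j.castSucc)) := rfl
      rw [h1, seqComp_split b a (fun t => F t.castSucc), h2]
      rfl

lemma seqComp_fixed {V : Type*} [AddCommMonoid V] [Module ℂ V] :
    ∀ {T : ℕ} (E : Fin T → (V →ₗ[ℂ] V)) (x : V), (∀ t, E t x = x) → seqComp E x = x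
  | 0, E, x, h => rfl
  | T + 1, E, x, h => by
      show E (Fin.last T) (seqComp (fun t => E t.castSucc) x) = x
      rw [seqComp_fixed _ x (fun t => h _), h]

lemma seqComp_inv {V : Type*} [AddCommMonoid V] [Module ℂ V] (f : V → ℂ) :
    ∀ {T : ℕ} (E : Fin T → (V →ₗ[ℂ] V)), (∀ t ρ, f (E t ρ) = f ρ) → ∀ ρ, f (seqComp E ρ) = f ρ
  | 0, E, h, ρ => rfl
  | T + 1, E, h, ρ => by
      show f (E (Fin.last T) (seqComp (fun t => E t.castSucc) ρ)) = f ρ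
      rw [h, seqComp_inv f _ (fun t => h _) ρ]

lemma exists_sorted_perm {T : ℕ} (p : Fin T → Prop) [DecidablePred p] :
    ∃ (a b : ℕ) (h : a + b = T) (π : Fin (a + b) ≃ Fin T),
      (∀ i : Fin a, ¬ p (π (Fin.castAdd b i))) ∧ (∀ j : Fin b, p (π (Fin.natAdd a j))) := by
  classical
  let e1 := Fintype.equivFin {t // ¬ p t}
  let e2 := Fintype.equivFin {t // p t}
  have hcard : Fintype.card {t // ¬ p t} + Fintype.card {t // p t} = T := by
    have := Fintype.card_congr (Equiv.sumCompl p)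
    rw [Fintype.card_sum, Fintype.card_fin] at this
    omega
  refine ⟨_, _, hcard,
    finSumFinEquiv.symm.trans ((Equiv.sumCongr e1.symm e2.symm).trans
      ((Equiv.sumComm _ _).trans (Equiv.sumCompl p))), ?_, ?_⟩
  · intro i
    simp only [Equiv.trans_apply, finSumFinEquiv_symm_apply_castAdd, Equiv.sumCongr_apply,
      Sum.map_inl, Equiv.sumComm_apply, Sum.swap_inl, Equiv.sumCompl_apply_inr]
    exact (e1.symm i).2
  · intro j
    simp only [Equiv.trans_apply, finSumFinEquiv_symm_apply_natAdd, Equiv.sumCongr_apply,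
      Sum.map_inr, Equiv.sumComm_apply, Sum.swap_inr, Equiv.sumCompl_apply_inl]
    exact (e2.symm j).2

lemma merge_self {d : Fin N → ℕ} (S : Finset (Fin N)) (v : Idx d) :
    merge d S (fun i => v i) (fun i => v i) = v := by
  funext i
  unfold merge
  split <;> rfl

open Classical in
lemma actsOn_entry {d : Fin N → ℕ} {S : Finset (Fin N)} {X : Matrix (Idx d) (Idx d) ℂ}
    (hX : ActsOn d S X) :
    ∃ Y : Matrix (SIdx d S) (SIdx d S) ℂ, ∀ a c : Idx d,
      X a c = if (∀ i, i ∉ S → a i = c i) then Y (fun i => a i) (fun i => c i) else 0 := by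
  obtain ⟨Y, hY⟩ := hX
  refine ⟨Y, fun a c => ?_⟩
  have h := hY (fun i => a i) (fun i => c i) (fun i => a i) (fun i => c i)
  rw [merge_self, merge_self] at h
  rw [h]
  refine if_congr ?_ rfl rfl
  rw [funext_iff]
  constructor
  · intro h' i hi
    exact h' ⟨i, Finset.mem_compl.mpr hi⟩
  · intro h' i
    exact h' i (Finset.mem_compl.mp i.2)

lemma actsOn_comm {d : Fin N → ℕ} {S T : Finset (Fin N)}
    {X K : Matrix (Idx d) (Idx d) ℂ} (hX : ActsOn d S X) (hK : ActsOn d T K)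
    (hST : ∀ i, i ∈ S → i ∉ T) : X * K = K * X := by
  classical
  obtain ⟨Y, hY⟩ := actsOn_entry hX
  obtain ⟨Z, hZ⟩ := actsOn_entry hK
  ext a b
  rw [Matrix.mul_apply, Matrix.mul_apply]
  set c₀ : Idx d := fun i => if i ∈ T then a i else b i with hc₀
  set c₁ : Idx d := fun i => if i ∈ S then a i else b i with hc₁
  have hL : ∑ c, X a c * K c b = X a c₀ * K c₀ b := by
    refine Fintype.sum_eq_single c₀ fun c hc => ?_
    by_contra hne
    have hx : ∀ i, i ∉ S → a i = c i := by
      by_contra h'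
      rw [hY, if_neg h', zero_mul] at hne
      exact hne rfl
    have hk : ∀ i, i ∉ T → c i = b i := by
      by_contra h'
      rw [hZ, if_neg h', mul_zero] at hne
      exact hne rfl
    refine hc (funext fun i => ?_)
    by_cases hiT : i ∈ T
    · rw [hc₀]; simp only [if_pos hiT]
      exact (hx i (fun hiS => hST i hiS hiT)).symm
    · rw [hc₀]; simp only [if_neg hiT]
      exact hk i hiT
  have hR : ∑ c, K a c * X c b = K a c₁ * X c₁ b := by
    refine Fintype.sum_eq_single c₁ fun c hc => ?_
    by_contra hne
    have hk : ∀ i, i ∉ T → a i = c i := by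
      by_contra h'
      rw [hZ, if_neg h', zero_mul] at hne
      exact hne rfl
    have hx : ∀ i, i ∉ S → c i = b i := by
      by_contra h'
      rw [hY, if_neg h', mul_zero] at hne
      exact hne rfl
    refine hc (funext fun i => ?_)
    by_cases hiS : i ∈ S
    · rw [hc₁]; simp only [if_pos hiS]
      exact (hk i (hST i hiS)).symm
    · rw [hc₁]; simp only [if_neg hiS]
      exact hx i hiS
  rw [hL, hR]
  by_cases hab : ∀ i, i ∉ S → i ∉ T → a i = b i
  · have h1 : ∀ i, i ∉ S → a i = c₀ i := by
      intro i hi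
      by_cases hiT : i ∈ T
      · rw [hc₀]; simp [hiT]
      · rw [hc₀]; simp only [if_neg hiT]; exact hab i hi hiT
    have h2 : ∀ i, i ∉ T → c₀ i = b i := by
      intro i hi; rw [hc₀]; simp [hi]
    have h3 : ∀ i, i ∉ T → a i = c₁ i := by
      intro i hi
      by_cases hiS : i ∈ S
      · rw [hc₁]; simp [hiS]
      · rw [hc₁]; simp only [if_neg hiS]; exact hab i hiS hi
    have h4 : ∀ i, i ∉ S → c₁ i = b i := by
      intro i hi; rw [hc₁]; simp [hi]
    rw [hY, hZ, hY, hZ, if_pos h1, if_pos h2, if_pos h3, if_pos h4]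
    have e1 : (fun i : {x // x ∈ S} => c₀ i) = fun i : {x // x ∈ S} => b i := by
      funext i
      rw [hc₀]; simp only [if_neg (hST i.1 i.2)]
    have e2 : (fun i : {x // x ∈ T} => c₀ i) = fun i : {x // x ∈ T} => a i := by
      funext i
      rw [hc₀]; simp [i.2]
    have e3 : (fun i : {x // x ∈ T} => c₁ i) = fun i : {x // x ∈ T} => b i := by
      funext i
      rw [hc₁]; simp only [if_neg (fun hS => hST i.1 hS i.2)]
    have e4 : (fun i : {x // x ∈ S} => c₁ i) = fun i : {x // x ∈ S} => a i := by
      funext i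
      rw [hc₁]; simp [i.2]
    rw [e1, e2, e3, e4]
    ring
  · push_neg at hab
    obtain ⟨i, hiS, hiT, hne⟩ := hab
    have hx0 : X a c₀ = 0 := by
      rw [hY, if_neg]
      push_neg
      refine ⟨i, hiS, ?_⟩
      rw [hc₀]; simp only [if_neg hiT]
      exact hne
    have hk0 : K a c₁ = 0 := by
      rw [hZ, if_neg]
      push_neg
      refine ⟨i, hiT, ?_⟩
      rw [hc₁]; simp only [if_neg hiS]
      exact hne
    rw [hx0, hk0, zero_mul, zero_mul]

lemma trace_mul_kraus {n : Type*} [Fintype n] [DecidableEq n] {m : ℕ}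
    (Kr : Fin m → Matrix n n ℂ) (X ρ : Matrix n n ℂ)
    (hsum : ∑ i, (Kr i)ᴴ * Kr i = 1) (hcomm : ∀ i, X * Kr i = Kr i * X) :
    (X * ∑ i, Kr i * ρ * (Kr i)ᴴ).trace = (X * ρ).trace := by
  rw [Finset.mul_sum, Matrix.trace_sum]
  have h : ∀ i : Fin m, (X * (Kr i * ρ * (Kr i)ᴴ)).trace = ((X * ρ) * ((Kr i)ᴴ * Kr i)).trace := by
    intro i
    calc (X * (Kr i * ρ * (Kr i)ᴴ)).trace
        = (Kr i * (X * ρ * (Kr i)ᴴ)).trace := by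
          rw [show X * (Kr i * ρ * (Kr i)ᴴ) = (X * Kr i) * (ρ * (Kr i)ᴴ) by
            simp [mul_assoc], hcomm i]
          simp [mul_assoc]
      _ = ((X * ρ * (Kr i)ᴴ) * Kr i).trace := Matrix.trace_mul_comm _ _
      _ = ((X * ρ) * ((Kr i)ᴴ * Kr i)).trace := by rw [mul_assoc]
  rw [Finset.sum_congr rfl fun i _ => h i, ← Matrix.trace_sum, ← Finset.mul_sum, hsum, mul_one]

lemma kraus_fix {n : Type*} [Fintype n] [DecidableEq n] {m : ℕ}
    (Kr : Fin m → Matrix n n ℂ) (Y P' : Matrix n n ℂ)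
    (hcomm : ∀ i, Y * Kr i = Kr i * Y) :
    ∑ i, Kr i * (Y * P') * (Kr i)ᴴ = Y * ∑ i, Kr i * P' * (Kr i)ᴴ := by
  rw [Finset.mul_sum]
  refine Finset.sum_congr rfl fun i _ => ?_
  rw [show Kr i * (Y * P') = (Kr i * Y) * P' by rw [mul_assoc], ← hcomm i]
  simp [mul_assoc]

noncomputable def outerM {n : Type*} (u w : n → ℂ) : Matrix n n ℂ :=
  Matrix.of fun a b => u a * (starRingEnd ℂ) (w b)

lemma outerM_posSemidef {n : Type*} [Fintype n] (w : n → ℂ) :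
    (outerM w w).PosSemidef := by
  rw [Matrix.posSemidef_iff_dotProduct_mulVec]
  constructor
  · ext a b
    simp [outerM, Matrix.conjTranspose_apply, mul_comm]
  · intro x
    have h : star x ⬝ᵥ (outerM w w).mulVec x
        = star (∑ a, (starRingEnd ℂ) (w a) * x a) * (∑ a, (starRingEnd ℂ) (w a) * x a) := by
      simp only [dotProduct, Matrix.mulVec, outerM, Matrix.of_apply, Pi.star_apply,
        star_sum, star_mul', Finset.sum_mul, Finset.mul_sum]
      rw [Finset.sum_comm]
      refine Finset.sum_congr rfl fun a _ => Finset.sum_congr rfl fun b _ => ?_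
      simp [RCLike.star_def]
      ring
    rw [h]
    exact star_mul_self_nonneg _

lemma outerM_pol {n : Type*} (u w : n → ℂ) :
    outerM u w = (4:ℂ)⁻¹ • (outerM (u+w) (u+w) + Complex.I • outerM (u + Complex.I • w) (u + Complex.I • w)
      - outerM (u - w) (u - w) - Complex.I • outerM (u - Complex.I • w) (u - Complex.I • w)) := by
  funext a b
  simp only [outerM, Matrix.smul_apply, Matrix.sub_apply, Matrix.add_apply, Matrix.of_apply,
    Pi.add_apply, Pi.sub_apply, Pi.smul_apply, smul_eq_mul, map_add, map_sub, map_mul,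
    Complex.conj_I]
  linear_combination ((2:ℂ)⁻¹ * (u a * (starRingEnd ℂ) (w b) - w a * (starRingEnd ℂ) (u b))) * Complex.I_mul_I

lemma outerM_trace {n : Type*} [Fintype n] [DecidableEq n] (v : n → ℂ) :
    (outerM v v).trace = ((∑ a, Complex.normSq (v a) : ℝ) : ℂ) := by
  simp [Matrix.trace, Matrix.diag, outerM, Complex.mul_conj]

lemma phi_outer_diag {d : Fin N → ℕ} (Φ : Sop d) (P : Matrix (Idx d) (Idx d) ℂ)
    (hdens : ∀ σ, IsDensity d σ → Φ σ = P) (v : Idx d → ℂ) :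
    Φ (outerM v v) = (outerM v v).trace • P := by
  by_cases hv : v = 0
  · subst hv
    have h0 : outerM (0 : Idx d → ℂ) 0 = 0 := by
      funext a b; simp [outerM]
    rw [h0, map_zero, Matrix.trace_zero, zero_smul]
  · have hex : ∃ a, v a ≠ 0 := by
      by_contra h'; push_neg at h'; exact hv (funext h')
    obtain ⟨a₀, ha₀⟩ := hex
    set nv : ℝ := ∑ a, Complex.normSq (v a) with hnv
    have hnvpos : 0 < nv :=
      Finset.sum_pos' (fun a _ => Complex.normSq_nonneg _)
        ⟨a₀, Finset.mem_univ _, Complex.normSq_pos.mpr ha₀⟩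
    set s : ℝ := Real.sqrt nv with hs
    have hspos : 0 < s := Real.sqrt_pos.mpr hnvpos
    set u : Idx d → ℂ := fun a => ((s⁻¹ : ℝ) : ℂ) * v a with hu
    have key : outerM v v = ((nv : ℝ) : ℂ) • outerM u u := by
      funext a b
      simp only [outerM, Matrix.smul_apply, Matrix.of_apply, hu, map_mul, Complex.conj_ofReal,
        smul_eq_mul, Complex.ofReal_inv]
      have hsne : ((s : ℝ) : ℂ) ≠ 0 := by
        simp only [ne_eq, Complex.ofReal_eq_zero]
        positivity
      have hns : ((nv : ℝ) : ℂ) = ((s:ℝ):ℂ) * ((s:ℝ):ℂ) := by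
        rw [← Complex.ofReal_mul, Real.mul_self_sqrt hnvpos.le]
      rw [hns]
      field_simp
      rw [map_div₀, map_one, Complex.conj_ofReal]
      field_simp
    have hdu : IsDensity d (outerM u u) := by
      refine ⟨outerM_posSemidef u, ?_⟩
      rw [outerM_trace]
      have : ∀ a, Complex.normSq (u a) = s⁻¹ * s⁻¹ * Complex.normSq (v a) := by
        intro a
        rw [hu]
        simp [Complex.normSq_mul, Complex.normSq_ofReal]
      rw [Finset.sum_congr rfl fun a _ => this a, ← Finset.mul_sum, ← hnv]
      have : s⁻¹ * s⁻¹ * nv = 1 := by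
        rw [← mul_inv, Real.mul_self_sqrt hnvpos.le]
        field_simp
      rw [this, Complex.ofReal_one]
    rw [key, map_smul, hdens _ hdu, Matrix.trace_smul, hdu.2]
    simp

lemma phi_outer {d : Fin N → ℕ} (Φ : Sop d) (P : Matrix (Idx d) (Idx d) ℂ)
    (hdens : ∀ σ, IsDensity d σ → Φ σ = P) (u w : Idx d → ℂ) :
    Φ (outerM u w) = (outerM u w).trace • P := by
  set g : Sop d := Φ - (Matrix.traceLinearMap (Idx d) ℂ ℂ).smulRight P with hg
  have hgv : ∀ v, g (outerM v v) = 0 := by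
    intro v
    simp only [hg, LinearMap.sub_apply, LinearMap.smulRight_apply, Matrix.traceLinearMap_apply]
    rw [phi_outer_diag Φ P hdens v, sub_self]
  have h : g (outerM u w) = 0 := by
    rw [outerM_pol u w, map_smul, map_sub, map_sub, map_add, map_smul, map_smul]
    simp [hgv]
  have h' := sub_eq_zero.mp h
  simpa only [hg, LinearMap.sub_apply, LinearMap.smulRight_apply,
    Matrix.traceLinearMap_apply, sub_eq_zero] using h

lemma mul_proj_eq_outer {d : Fin N → ℕ} (Y : Matrix (Idx d) (Idx d) ℂ) (ψ : Idx d → ℂ) :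
    Y * proj d ψ = outerM (Y.mulVec ψ) ψ := by
  funext a b
  simp only [Matrix.mul_apply, proj, outerM, Matrix.of_apply, Matrix.mulVec, dotProduct,
    Finset.sum_mul]
  exact Finset.sum_congr rfl fun c _ => by ring


/-- Theorem 7(i), finite correlation: if `ψ` is RFTS with respect to `𝒩`
and `A`, `B` have disjoint neighborhood expansions, then observables acting only on `A`
and only on `B` are uncorrelated in the state `|ψ⟩⟨ψ|`. -/

theorem rfts_finite_correlation {N K : ℕ} (d : Fin N → ℕ)
    (𝒩 : Fin K → Finset (Fin N)) (ψ : Idx d → ℂ) (hunit : IsUnitVec d ψ)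
    (hRFTS : RFTS d 𝒩 ψ)
    (A B : Finset (Fin N)) (hdisj : expand 𝒩 A ∩ expand 𝒩 B = ∅) :
    ∀ X Y : Matrix (Idx d) (Idx d) ℂ, ActsOn d A X → ActsOn d B Y →
      (X * Y * proj d ψ).trace = (X * proj d ψ).trace * (Y * proj d ψ).trace := by
  classical
  intro X Y hX hY
  obtain ⟨T, E, hnbr, hfix, hperm⟩ := hRFTS
  choose k hk using hnbr
  have SF : ∀ t : Fin T, (𝒩 (k t) ∩ B).Nonempty → ∀ i ∈ 𝒩 (k t), i ∉ A := by
    intro t ht i hiN hiA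
    have hA : i ∈ expand 𝒩 A := by
      rw [expand, Finset.mem_biUnion]
      exact ⟨k t, Finset.mem_univ _,
        by rw [if_pos ⟨i, Finset.mem_inter.mpr ⟨hiN, hiA⟩⟩]; exact hiN⟩
    have hB : i ∈ expand 𝒩 B := by
      rw [expand, Finset.mem_biUnion]
      exact ⟨k t, Finset.mem_univ _, by rw [if_pos ht]; exact hiN⟩
    have hmem : i ∈ expand 𝒩 A ∩ expand 𝒩 B := Finset.mem_inter.mpr ⟨hA, hB⟩
    rw [hdisj] at hmem
    exact absurd hmem (Finset.notMem_empty i)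
  obtain ⟨a, b, hab, π, hπ1, hπ2⟩ :=
    exists_sorted_perm (fun t : Fin T => (𝒩 (k t) ∩ B).Nonempty)
  subst hab
  set P : Matrix (Idx d) (Idx d) ℂ := proj d ψ with hP
  set M0 : Matrix (Idx d) (Idx d) ℂ := Y * P with hM0
  have hC1 : seqComp (fun i : Fin a => E (π (Fin.castAdd b i))) M0 = M0 := by
    apply seqComp_fixed
    intro i
    obtain ⟨m, Kr, hacts, hrep, hsum⟩ := hk (π (Fin.castAdd b i))
    have hdisjBN : ∀ j, j ∈ B → j ∉ 𝒩 (k (π (Fin.castAdd b i))) := by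
      intro j hjB hjN
      exact hπ1 i ⟨j, Finset.mem_inter.mpr ⟨hjN, hjB⟩⟩
    have hcomm : ∀ l, Y * Kr l = Kr l * Y := fun l => actsOn_comm hY (hacts l) hdisjBN
    rw [hrep, hM0, kraus_fix Kr Y P hcomm, ← hrep, hfix]
  have hC2 : ∀ ρ, (X * (seqComp (fun j : Fin b => E (π (Fin.natAdd a j))) ρ)).trace
      = (X * ρ).trace := by
    refine seqComp_inv (fun ρ => (X * ρ).trace) _ ?_
    intro j ρ'
    obtain ⟨m, Kr, hacts, hrep, hsum⟩ := hk (π (Fin.natAdd a j))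
    have hdisjAN : ∀ i, i ∈ A → i ∉ 𝒩 (k (π (Fin.natAdd a j))) := by
      intro i hiA hiN
      exact SF _ (hπ2 j) i hiN hiA
    have hcomm : ∀ l, X * Kr l = Kr l * X := fun l => actsOn_comm hX (hacts l) hdisjAN
    show (X * (E (π (Fin.natAdd a j)) ρ')).trace = (X * ρ').trace
    rw [hrep]
    exact trace_mul_kraus Kr X ρ' hsum hcomm
  have hsplit : seqComp (fun t => E (π t)) M0
      = seqComp (fun j : Fin b => E (π (Fin.natAdd a j)))
          (seqComp (fun i : Fin a => E (π (Fin.castAdd b i))) M0) := by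
    rw [seqComp_split b a (fun t => E (π t))]
    rfl
  have hΦ : seqComp (fun t => E (π t)) M0 = M0.trace • P := by
    rw [hM0, mul_proj_eq_outer Y ψ]
    exact phi_outer (seqComp (fun t => E (π t))) P (hperm π) (Y.mulVec ψ) ψ
  calc (X * Y * P).trace = (X * M0).trace := by rw [hM0, mul_assoc]
    _ = (X * (seqComp (fun j : Fin b => E (π (Fin.natAdd a j))) M0)).trace := (hC2 M0).symm
    _ = (X * (seqComp (fun t => E (π t)) M0)).trace := by rw [hsplit, hC1]
    _ = (X * (M0.trace • P)).trace := by rw [hΦ]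
    _ = (X * P).trace * (Y * P).trace := by
        rw [Matrix.mul_smul, Matrix.trace_smul, hM0, smul_eq_mul]
        ring


end QLS
end
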